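/- arXiv:1707.01028 — 2 statements merged into one kernel-verified Lean document; each statement's English description precedes it below -/
import Mathlib

section
/- Under the age-indexed Markov renewal hypothesis, the age-indexed semi-Markov transition probability function with initial and final backward satisfies, for all states i,j in E and all natural numbers u ≤ s, u', t with s ≤ t (and whenever the conditioning events have positive probability), the recursive system of equations: ᵃ⁺ˢ⁻ᵘφ_{ij}(u,s;u',t) = 1_{\{i=j\}} · 1_{\{u' = t−s+u\}} · ᵃ⁺ˢ⁻ᵘH̄_i(s−u;t) / ᵃ⁺ˢ⁻ᵘH̄_i(s−u;s) + Σ_{k∈E} Σ_{θ=s+1}^{t−u'} ( ᵃ⁺ˢ⁻ᵘq_{ik}(s−u;θ) / ᵃ⁺ˢ⁻ᵘH̄_i(s−u;s) ) · ᵃ⁺θφ_{kj}(0,θ;u',t). -/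
open MeasureTheory Finset

/-- Index type for finite histories of a Markov renewal process. -/
abbrev SMidx (E : Type*) := Σ m : ℕ, (Fin (m+1) → E) × (Fin (m+1) → ℕ)

/-- The cylinder (history) event determined by `v`. -/
def SMhist {Ω E : Type*} (J : ℕ → Ω → E) (T : ℕ → Ω → ℕ) (v : SMidx E) : Set Ω :=
  {ω | ∀ h : Fin (v.1+1), J h ω = v.2.1 h ∧ T h ω = v.2.2 h}

/-- Extending a history by one transition. -/
def SMext {E : Type*} (v : SMidx E) (k : E) (θ : ℕ) : SMidx E :=
  ⟨v.1+1, Fin.snoc v.2.1 k, Fin.snoc v.2.2 θ⟩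

/-- The piece of the event `{Z r = κ, B r = w}` corresponding to the history `v`. -/
def SMpiece {Ω E : Type*} [DecidableEq E] (J : ℕ → Ω → E) (T : ℕ → Ω → ℕ)
    (v : SMidx E) (κ : E) (w r : ℕ) : Set Ω :=
  if v.2.1 (Fin.last _) = κ ∧ v.2.2 (Fin.last _) = r - w ∧ w ≤ r then
    SMhist J T v ∩ {ω | r < T (v.1+1) ω} else ∅

lemma SMhist_ext {Ω E : Type*} (J : ℕ → Ω → E) (T : ℕ → Ω → ℕ) (v : SMidx E) (k : E) (θ : ℕ) :
    SMhist J T (SMext v k θ)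
      = SMhist J T v ∩ {ω | J (v.1+1) ω = k ∧ T (v.1+1) ω = θ} := by
  ext ω
  simp only [SMhist, SMext, Set.mem_inter_iff, Set.mem_setOf_eq]
  constructor
  · intro H
    refine ⟨fun h => ?_, ?_⟩
    · have := H h.castSucc
      simpa [Fin.snoc_castSucc] using this
    · have := H (Fin.last _)
      simpa [Fin.snoc_last] using this
  · rintro ⟨H1, H2⟩ h
    induction h using Fin.lastCases with
    | last => simpa [Fin.snoc_last] using H2
    | cast h => simpa [Fin.snoc_castSucc] using H1 h

lemma SMhist_measurable {Ω E : Type*} [MeasurableSpace Ω] [MeasurableSpace E]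
    [MeasurableSingletonClass E]
    {J : ℕ → Ω → E} {T : ℕ → Ω → ℕ} (hJ : ∀ n, Measurable (J n)) (hT : ∀ n, Measurable (T n))
    (v : SMidx E) : MeasurableSet (SMhist J T v) := by
  have : SMhist J T v
      = ⋂ h : Fin (v.1+1), ((fun ω => J h ω) ⁻¹' {v.2.1 h} ∩ (fun ω => T h ω) ⁻¹' {v.2.2 h}) := by
    ext ω; simp [SMhist, Set.mem_iInter, forall_and]
  rw [this]
  exact MeasurableSet.iInter fun h =>
    ((hJ h) (measurableSet_singleton _)).inter ((hT h) (measurableSet_singleton _))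

lemma SMpiece_measurable {Ω E : Type*} [MeasurableSpace Ω] [MeasurableSpace E]
    [MeasurableSingletonClass E] [DecidableEq E]
    {J : ℕ → Ω → E} {T : ℕ → Ω → ℕ} (hJ : ∀ n, Measurable (J n)) (hT : ∀ n, Measurable (T n))
    (v : SMidx E) (κ : E) (w r : ℕ) : MeasurableSet (SMpiece J T v κ w r) := by
  rw [SMpiece]
  split_ifs
  · exact (SMhist_measurable hJ hT v).inter ((hT (v.1+1)) measurableSet_Ioi)
  · exact MeasurableSet.empty

noncomputable def SMrho {E : Type*} [Fintype E] [DecidableEq E]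
    (Q q : ℕ → ℕ → E → E → ℕ → ℝ) (a : ℕ) (j : E) (u' t : ℕ) (θ : ℕ) (k : E) : ℝ :=
  (if k = j ∧ θ + u' = t then 1 - ∑ k' : E, Q (a + θ) θ k k' t else 0)
    + ∑ θ' ∈ (Finset.Icc (θ+1) (t - u')).attach,
        ∑ k' : E, q (a + θ) θ k k' θ'.1 * SMrho Q q a j u' t θ'.1 k'
termination_by t - u' - θ
decreasing_by
  have := θ'.2; simp only [Finset.mem_Icc] at this; omega

lemma SMrho_eq {E : Type*} [Fintype E] [DecidableEq E]
    (Q q : ℕ → ℕ → E → E → ℕ → ℝ) (a : ℕ) (j : E) (u' t : ℕ) (θ : ℕ) (k : E) :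
    SMrho Q q a j u' t θ k
      = (if k = j ∧ θ + u' = t then 1 - ∑ k' : E, Q (a + θ) θ k k' t else 0)
        + ∑ θ' ∈ Finset.Icc (θ+1) (t - u'),
            ∑ k' : E, q (a + θ) θ k k' θ' * SMrho Q q a j u' t θ' k' := by
  rw [SMrho]
  congr 1
  exact Finset.sum_attach (Finset.Icc (θ+1) (t - u'))
    (fun θ' => ∑ k' : E, q (a + θ) θ k k' θ' * SMrho Q q a j u' t θ' k')

lemma SMrho_zero {E : Type*} [Fintype E] [DecidableEq E]
    (Q q : ℕ → ℕ → E → E → ℕ → ℝ) (a : ℕ) (j : E) (u' t : ℕ) (θ : ℕ) (k : E)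
    (h : t < θ + u') : SMrho Q q a j u' t θ k = 0 := by
  rw [SMrho_eq]
  have h1 : ¬ (k = j ∧ θ + u' = t) := by rintro ⟨-, h2⟩; omega
  have h2 : Finset.Icc (θ+1) (t - u') = ∅ := by
    rw [Finset.Icc_eq_empty_iff]; omega
  rw [if_neg h1, h2]
  simp

/-- **Recursive system of equations for the age-indexed semi-Markov transition
probability function with initial and final backward.**

`(J n)` are the health states at the transitions, `(T n)` the (strictly increasing)
transition times with `T 0 = 0`, and `a` the initial age, so that the age at the `n`-th
transition is `A n = a + T n`.  The triple `(Jₙ, Tₙ, Aₙ)` is a non-homogeneous Markov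
renewal process with index: conditionally on any history of `(J, T)` up to the `n`-th
transition, the law of `(J (n+1), T (n+1))` is given by the age-indexed kernel `Q`,
evaluated at the age `a + T n` and time `T n` of the last transition (hypothesis `hMRP`,
stated for every cylinder event of the natural filtration; both sides vanish when the
history has probability zero).

`N t = sup {n : T n ≤ t}` is the counting process, `Z t = J (N t)` the age-indexed
semi-Markov chain, `B t = t - T (N t)` the backward recurrence time,
`ᵃH̄ i (s;t) = 1 - Σ_j ᵃQ i j (s;t)`, `ᵃq i j (s;t)` the kernel increment, and
`φ i u s j u' t = ℙ[Z t = j, B t = u' | Z s = i, B s = u]` the age-indexed semi-Markov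
transition probability function with initial and final backward (the further condition
`A_{N(s)} = a + T_{N(s)}` holds automatically).

Then, for all `i j : E`, `u ≤ s ≤ t`, `u'`, whenever the conditioning event
`{Z s = i, B s = u}` has positive probability,

`φ_{ij}(u,s;u',t) = 1_{i=j} 1_{u'=t-s+u} · H̄_i(s-u;t)/H̄_i(s-u;s)
   + Σ_{k ∈ E} Σ_{θ=s+1}^{t-u'} (q_{ik}(s-u;θ)/H̄_i(s-u;s)) · φ_{kj}(0,θ;u',t)`,

where all kernel quantities are taken at age `a + s - u` (the age at the last
transition before `s`), and the inner `φ_{kj}(0,θ;u',t)` corresponds to age `a + θ`. -/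
theorem age_indexed_semi_markov_backward_recursion
    {Ω : Type*} [MeasurableSpace Ω] (μ : Measure Ω) [IsProbabilityMeasure μ]
    {E : Type*} [Fintype E] [DecidableEq E] [Nonempty E] [MeasurableSpace E] [MeasurableSingletonClass E]
    (J : ℕ → Ω → E) (T : ℕ → Ω → ℕ)
    (hJmeas : ∀ n, Measurable (J n)) (hTmeas : ∀ n, Measurable (T n))
    (hT0 : ∀ ω, T 0 ω = 0)
    (hTmono : ∀ ω, StrictMono fun n => T n ω)
    (a : ℕ)
    -- the counting process, the age-indexed semi-Markov chain, the backward time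
    (N : ℕ → Ω → ℕ) (hN : ∀ t ω, N t ω = Nat.findGreatest (fun n => T n ω ≤ t) t)
    (Z : ℕ → Ω → E) (hZ : ∀ t ω, Z t ω = J (N t ω) ω)
    (B : ℕ → Ω → ℕ) (hB : ∀ t ω, B t ω = t - T (N t ω) ω)
    -- the age-indexed semi-Markov kernel `ᵅQ_{ij}(s;t)`, where `α` is the age at the
    -- entrance time `s`
    (Q : ℕ → ℕ → E → E → ℕ → ℝ)
    -- the age-indexed Markov renewal hypothesis
    (hMRP : ∀ (n : ℕ) (ih : ℕ → E) (th : ℕ → ℕ) (j : E) (t : ℕ),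
      (μ ({ω | J (n + 1) ω = j ∧ T (n + 1) ω ≤ t}
          ∩ {ω | ∀ h ≤ n, J h ω = ih h ∧ T h ω = th h})).toReal
        = Q (a + th n) (th n) (ih n) j t
            * (μ {ω | ∀ h ≤ n, J h ω = ih h ∧ T h ω = th h}).toReal)
    -- `ᵅH̄_i(s;t)`: the probability of remaining in state `i` up to time `t`
    (Hbar : ℕ → ℕ → E → ℕ → ℝ)
    (hHbar : ∀ α s i t, Hbar α s i t = 1 - ∑ j : E, Q α s i j t)
    -- the kernel increment `ᵅq_{ij}(s;t)`
    (q : ℕ → ℕ → E → E → ℕ → ℝ)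
    (hq : ∀ α s i j t, q α s i j t =
      if s < t then Q α s i j t - Q α s i j (t - 1) else 0)
    -- the transition probability function with initial and final backward
    (φ : E → ℕ → ℕ → E → ℕ → ℕ → ℝ)
    (hφ : ∀ i u s j u' t, φ i u s j u' t =
      (μ ({ω | Z t ω = j ∧ B t ω = u'} ∩ {ω | Z s ω = i ∧ B s ω = u})).toReal
        / (μ {ω | Z s ω = i ∧ B s ω = u}).toReal)
    (i j : E) (u s u' t : ℕ) (hus : u ≤ s) (hst : s ≤ t)
    (hpos : 0 < μ {ω | Z s ω = i ∧ B s ω = u}) :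
    φ i u s j u' t
      = (if i = j then (1 : ℝ) else 0) * (if u' = t - s + u then (1 : ℝ) else 0)
          * (Hbar (a + s - u) (s - u) i t / Hbar (a + s - u) (s - u) i s)
        + ∑ k : E, ∑ θ ∈ Finset.Icc (s + 1) (t - u'),
            (q (a + s - u) (s - u) i k θ / Hbar (a + s - u) (s - u) i s)
              * φ k 0 θ j u' t := by
  classical
  -- ## Pointwise facts about `T` and `N`
  have hTle : ∀ ω n, n ≤ T n ω := fun ω n => (hTmono ω).le_apply
  have hTsucc : ∀ ω n, T n ω < T (n+1) ω := fun ω n => hTmono ω (Nat.lt_succ_self n)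
  have hNeq : ∀ ω m r, T m ω ≤ r → r < T (m+1) ω → N r ω = m := by
    intro ω m r h1 h2
    have hm : m ≤ r := le_trans (hTle ω m) h1
    rw [hN, Nat.findGreatest_eq_iff]
    refine ⟨hm, fun _ => h1, fun n hn hn' hP => ?_⟩
    have : T (m+1) ω ≤ T n ω := (hTmono ω).monotone (by omega)
    omega
  have hNle : ∀ ω r, T (N r ω) ω ≤ r := by
    intro ω r
    rw [hN]
    have h0 : T 0 ω ≤ r := by rw [hT0 ω]; exact Nat.zero_le r
    exact Nat.findGreatest_spec (P := fun n => T n ω ≤ r) (Nat.zero_le r) h0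
  have hNge : ∀ ω r m, T m ω ≤ r → m ≤ N r ω := by
    intro ω r m h
    rw [hN]
    exact Nat.le_findGreatest (le_trans (hTle ω m) h) h
  -- ## Measure-theoretic helpers
  have hHm : ∀ v : SMidx E, MeasurableSet (SMhist J T v) := SMhist_measurable hJmeas hTmeas
  have hPm : ∀ (v : SMidx E) κ w r, MeasurableSet (SMpiece J T v κ w r) :=
    fun v κ w r => SMpiece_measurable hJmeas hTmeas v κ w r
  have htRadd : ∀ (X Y : Set Ω), MeasurableSet Y →
      (μ X).toReal = (μ (X ∩ Y)).toReal + (μ (X \ Y)).toReal := by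
    intro X Y hY
    rw [← ENNReal.toReal_add (measure_ne_top μ _) (measure_ne_top μ _),
      measure_inter_add_diff X hY]
  -- ## The one-step Markov renewal identities, reformulated on `SMhist`
  have hL1 : ∀ (v : SMidx E) (k : E) (x : ℕ),
      (μ ({ω | J (v.1+1) ω = k ∧ T (v.1+1) ω ≤ x} ∩ SMhist J T v)).toReal
        = Q (a + v.2.2 (Fin.last _)) (v.2.2 (Fin.last _)) (v.2.1 (Fin.last _)) k x
            * (μ (SMhist J T v)).toReal := by
    intro v k x
    have hmem : ∀ h : ℕ, h ≤ v.1 → min h v.1 < v.1 + 1 := by omega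
    have h1 := hMRP v.1 (fun h => v.2.1 ⟨min h v.1, by omega⟩)
      (fun h => v.2.2 ⟨min h v.1, by omega⟩) k x
    have hset : {ω | ∀ h ≤ v.1, J h ω = v.2.1 ⟨min h v.1, by omega⟩
        ∧ T h ω = v.2.2 ⟨min h v.1, by omega⟩} = SMhist J T v := by
      ext ω
      simp only [SMhist, Set.mem_setOf_eq]
      constructor
      · intro H h
        have h2 : (h : ℕ) ≤ v.1 := by omega
        have := H h h2
        simpa [Nat.min_eq_left h2, Fin.eta] using this
      · intro H h hh
        have := H ⟨h, by omega⟩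
        simpa [Nat.min_eq_left hh] using this
    have hlst : (⟨min v.1 v.1, by omega⟩ : Fin (v.1+1)) = Fin.last v.1 := by
      apply Fin.ext; simp [Fin.val_last]
    rw [hset] at h1
    simp [hlst] at h1
    exact h1
  have hL3 : ∀ (v : SMidx E) (x : ℕ),
      (μ (SMhist J T v ∩ {ω | x < T (v.1+1) ω})).toReal
        = (1 - ∑ k' : E, Q (a + v.2.2 (Fin.last _)) (v.2.2 (Fin.last _))
            (v.2.1 (Fin.last _)) k' x) * (μ (SMhist J T v)).toReal := by
    intro v x
    have hsplit := htRadd (SMhist J T v) {ω | T (v.1+1) ω ≤ x}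
      ((hTmeas (v.1+1)) measurableSet_Iic)
    have hdiff : SMhist J T v \ {ω | T (v.1+1) ω ≤ x} = SMhist J T v ∩ {ω | x < T (v.1+1) ω} := by
      ext ω; simp only [Set.mem_diff, Set.mem_inter_iff, Set.mem_setOf_eq, not_le]
    have hcov : SMhist J T v ∩ {ω | T (v.1+1) ω ≤ x}
        = ⋃ k' ∈ (Finset.univ : Finset E),
            ({ω | J (v.1+1) ω = k' ∧ T (v.1+1) ω ≤ x} ∩ SMhist J T v) := by
      ext ω
      simp only [Set.mem_inter_iff, Set.mem_setOf_eq, Set.mem_iUnion, Finset.mem_univ,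
        exists_prop, true_and]
      tauto
    have hdisj : (↑(Finset.univ : Finset E) : Set E).PairwiseDisjoint
        (fun k' => {ω | J (v.1+1) ω = k' ∧ T (v.1+1) ω ≤ x} ∩ SMhist J T v) := by
      intro k1 _ k2 _ hne
      apply Set.disjoint_left.2
      rintro ω ⟨⟨h1, -⟩, -⟩ ⟨⟨h2, -⟩, -⟩
      exact hne (h1 ▸ h2 ▸ rfl)
    have hmm : ∀ k' : E, MeasurableSet ({ω | J (v.1+1) ω = k' ∧ T (v.1+1) ω ≤ x} ∩ SMhist J T v) := by
      intro k'
      refine MeasurableSet.inter ?_ (hHm v)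
      have : {ω | J (v.1+1) ω = k' ∧ T (v.1+1) ω ≤ x}
          = (fun ω => J (v.1+1) ω) ⁻¹' {k'} ∩ (fun ω => T (v.1+1) ω) ⁻¹' (Set.Iic x) := by
        ext ω; simp [Set.mem_setOf_eq]
      rw [this]
      exact ((hJmeas _) (measurableSet_singleton _)).inter ((hTmeas _) measurableSet_Iic)
    have hsum : (μ (SMhist J T v ∩ {ω | T (v.1+1) ω ≤ x})).toReal
        = ∑ k' : E, Q (a + v.2.2 (Fin.last _)) (v.2.2 (Fin.last _)) (v.2.1 (Fin.last _)) k' x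
            * (μ (SMhist J T v)).toReal := by
      rw [hcov, measure_biUnion_finset hdisj (fun k' _ => hmm k'),
        ENNReal.toReal_sum (fun k' _ => measure_ne_top μ _)]
      exact Finset.sum_congr rfl fun k' _ => hL1 v k' x
    rw [hdiff] at hsplit
    rw [sub_mul, one_mul, Finset.sum_mul]
    linarith [hsplit, hsum]
  have hL2 : ∀ (v : SMidx E) (k : E) (θ' : ℕ), v.2.2 (Fin.last _) < θ' →
      (μ (SMhist J T (SMext v k θ'))).toReal
        = q (a + v.2.2 (Fin.last _)) (v.2.2 (Fin.last _)) (v.2.1 (Fin.last _)) k θ'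
            * (μ (SMhist J T v)).toReal := by
    intro v k θ' hlt
    rw [SMhist_ext]
    have hsplit := htRadd ({ω | J (v.1+1) ω = k ∧ T (v.1+1) ω ≤ θ'} ∩ SMhist J T v)
      {ω | T (v.1+1) ω ≤ θ' - 1} ((hTmeas _) measurableSet_Iic)
    have h1 : ({ω | J (v.1+1) ω = k ∧ T (v.1+1) ω ≤ θ'} ∩ SMhist J T v) ∩ {ω | T (v.1+1) ω ≤ θ' - 1}
        = {ω | J (v.1+1) ω = k ∧ T (v.1+1) ω ≤ θ' - 1} ∩ SMhist J T v := by
      ext ω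
      simp only [Set.mem_inter_iff, Set.mem_setOf_eq]
      constructor
      · rintro ⟨⟨⟨hj, hle⟩, hh⟩, hle'⟩
        exact ⟨⟨hj, hle'⟩, hh⟩
      · rintro ⟨⟨hj, hle'⟩, hh⟩
        exact ⟨⟨⟨hj, by omega⟩, hh⟩, hle'⟩
    have h2 : ({ω | J (v.1+1) ω = k ∧ T (v.1+1) ω ≤ θ'} ∩ SMhist J T v) \ {ω | T (v.1+1) ω ≤ θ' - 1}
        = SMhist J T v ∩ {ω | J (v.1+1) ω = k ∧ T (v.1+1) ω = θ'} := by
      ext ω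
      simp only [Set.mem_diff, Set.mem_inter_iff, Set.mem_setOf_eq, not_le]
      constructor
      · rintro ⟨⟨⟨hj, hle⟩, hh⟩, hgt⟩
        exact ⟨hh, hj, by omega⟩
      · rintro ⟨hh, hj, heq⟩
        exact ⟨⟨⟨hj, by omega⟩, hh⟩, by omega⟩
    rw [h1, h2] at hsplit
    rw [hq, if_pos hlt]
    have e1 := hL1 v k θ'
    have e2 := hL1 v k (θ' - 1)
    linarith [hsplit]
  -- ## Membership facts about `SMpiece`
  have hPmem : ∀ (v : SMidx E) (κ : E) (w r : ℕ) (ω : Ω), ω ∈ SMpiece J T v κ w r →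
      N r ω = v.1 ∧ ω ∈ SMhist J T v := by
    intro v κ w r ω hv
    rw [SMpiece] at hv
    split_ifs at hv with hc
    · obtain ⟨hhist, hT⟩ := hv
      have hTm : T v.1 ω = r - w := by
        have := (hhist (Fin.last _)).2
        rw [hc.2.1] at this
        simpa [Fin.val_last] using this
      exact ⟨hNeq ω v.1 r (by omega) (by simpa using hT), hhist⟩
    · exact absurd hv (Set.notMem_empty ω)
  -- ## Decomposition of the events `{Z r = κ, B r = w}` into history cylinders
  have hL6 : ∀ (κ : E) (w r : ℕ),
      {ω | Z r ω = κ ∧ B r ω = w} = ⋃ v : SMidx E, SMpiece J T v κ w r := by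
    intro κ w r
    ext ω
    simp only [Set.mem_setOf_eq, Set.mem_iUnion]
    constructor
    · rintro ⟨hZω, hBω⟩
      refine ⟨⟨N r ω, fun h => J h ω, fun h => T h ω⟩, ?_⟩
      have hTN : T (N r ω) ω ≤ r := hNle ω r
      have hBr := hB r ω
      have hTgt : r < T (N r ω + 1) ω := by
        by_contra hcon
        push_neg at hcon
        have := hNge ω r (N r ω + 1) hcon
        omega
      rw [SMpiece, if_pos]
      · exact ⟨fun h => ⟨rfl, rfl⟩, hTgt⟩
      · refine ⟨?_, ?_, by omega⟩
        · show J ((Fin.last (N r ω) : Fin (N r ω + 1)) : ℕ) ω = κ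
          rw [Fin.val_last, ← hZ r ω]
          exact hZω
        · show T ((Fin.last (N r ω) : Fin (N r ω + 1)) : ℕ) ω = r - w
          rw [Fin.val_last]
          omega
    · rintro ⟨v, hv⟩
      have hmem := hPmem v κ w r ω hv
      rw [SMpiece] at hv
      split_ifs at hv with hc
      · obtain ⟨hk, hτ, hwr⟩ := hc
        obtain ⟨hhist, -⟩ := hv
        have hTm : T v.1 ω = r - w := by
          have := (hhist (Fin.last _)).2
          rw [hτ] at this
          simpa [Fin.val_last] using this
        have hJm : J v.1 ω = κ := by
          have := (hhist (Fin.last _)).1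
          rw [hk] at this
          simpa [Fin.val_last] using this
        constructor
        · rw [hZ, hmem.1]
          exact hJm
        · rw [hB, hmem.1, hTm]
          omega
      · exact absurd hv (Set.notMem_empty ω)
  have hDisj : ∀ (κ : E) (w r : ℕ),
      Pairwise (Function.onFun Disjoint fun v : SMidx E => SMpiece J T v κ w r) := by
    intro κ w r v v' hne
    apply Set.disjoint_left.2
    intro ω hω hω'
    have h1 := hPmem v κ w r ω hω
    have h2 := hPmem v' κ w r ω hω'
    obtain ⟨m, f, g⟩ := v
    obtain ⟨m', f', g'⟩ := v'
    have hm : m = m' := by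
      have := h1.1
      have := h2.1
      simp only at *
      omega
    subst hm
    have hf : f = f' := by
      funext h0
      exact ((h1.2 h0).1).symm.trans ((h2.2 h0).1)
    have hg : g = g' := by
      funext h0
      exact ((h1.2 h0).2).symm.trans ((h2.2 h0).2)
    exact hne (by rw [hf, hg])
  -- ## Countable additivity over the history decomposition
  have hZBm : ∀ (κ : E) (w r : ℕ), MeasurableSet {ω | Z r ω = κ ∧ B r ω = w} := by
    intro κ w r
    rw [hL6]
    exact MeasurableSet.iUnion fun v => hPm v κ w r
  have hCnt : ∀ (D' : Set Ω), MeasurableSet D' → ∀ (κ : E) (w r : ℕ),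
      (μ (D' ∩ {ω | Z r ω = κ ∧ B r ω = w})).toReal
        = ∑' v : SMidx E, (μ (D' ∩ SMpiece J T v κ w r)).toReal := by
    intro D' hD' κ w r
    rw [hL6 κ w r, Set.inter_iUnion,
      measure_iUnion
        (fun v v' hne => ((hDisj κ w r hne).mono Set.inter_subset_right Set.inter_subset_right))
        (fun v => hD'.inter (hPm v κ w r)),
      ENNReal.tsum_toReal_eq (fun v => measure_ne_top μ _)]
  have hCnt' : ∀ (κ : E) (w r : ℕ),
      (μ {ω | Z r ω = κ ∧ B r ω = w}).toReal
        = ∑' v : SMidx E, (μ (SMpiece J T v κ w r)).toReal := by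
    intro κ w r
    have := hCnt Set.univ MeasurableSet.univ κ w r
    simpa [Set.univ_inter] using this
  -- ## The key recursion for the measure of `D ∩ history`
  have keyB : ∀ (g θ : ℕ), t - θ = g → θ ≤ t → ∀ v : SMidx E, v.2.2 (Fin.last _) = θ →
      (μ ({ω | Z t ω = j ∧ B t ω = u'} ∩ SMhist J T v)).toReal
        = SMrho Q q a j u' t θ (v.2.1 (Fin.last _)) * (μ (SMhist J T v)).toReal := by
    intro g
    induction g using Nat.strong_induction_on with
    | _ g IH =>
    intro θ hg hθt v hvθ
    have hTm : ∀ ω, ω ∈ SMhist J T v → T v.1 ω = θ := by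
      intro ω hh
      have := (hh (Fin.last _)).2
      rw [hvθ] at this
      simpa [Fin.val_last] using this
    by_cases hcase : t < θ + u'
    · have hempty : {ω | Z t ω = j ∧ B t ω = u'} ∩ SMhist J T v = ∅ := by
        apply Set.eq_empty_iff_forall_notMem.2
        rintro ω ⟨⟨hZt, hBt⟩, hhist⟩
        have hTm' := hTm ω hhist
        have h1 : v.1 ≤ N t ω := hNge ω t v.1 (by omega)
        have h2 : T v.1 ω ≤ T (N t ω) ω := (hTmono ω).monotone h1
        have h3 := hNle ω t
        have hBt' := hB t ω
        omega
      rw [hempty, SMrho_zero Q q a j u' t θ _ hcase]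
      simp
    · push_neg at hcase
      have hsplit := htRadd ({ω | Z t ω = j ∧ B t ω = u'} ∩ SMhist J T v)
        {ω | T (v.1+1) ω ≤ t} ((hTmeas _) measurableSet_Iic)
      have hmid : ({ω | Z t ω = j ∧ B t ω = u'} ∩ SMhist J T v) ∩ {ω | T (v.1+1) ω ≤ t}
          = ⋃ p ∈ (Finset.Ioc θ t ×ˢ (Finset.univ : Finset E)),
              ({ω | Z t ω = j ∧ B t ω = u'} ∩ SMhist J T (SMext v p.2 p.1)) := by
        ext ω
        simp only [Set.mem_inter_iff, Set.mem_setOf_eq, Set.mem_iUnion, Finset.mem_product,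
          Finset.mem_Ioc, Finset.mem_univ, and_true, exists_prop]
        constructor
        · rintro ⟨⟨hD, hhist⟩, hTle'⟩
          refine ⟨(T (v.1+1) ω, J (v.1+1) ω), ⟨?_, hTle'⟩, hD, ?_⟩
          · have := hTsucc ω v.1
            have := hTm ω hhist
            omega
          · rw [SMhist_ext]
            exact ⟨hhist, rfl, rfl⟩
        · rintro ⟨p, ⟨hθ', hle⟩, hD, hhist'⟩
          rw [SMhist_ext] at hhist'
          obtain ⟨hhist, hJp, hTp⟩ := hhist'
          exact ⟨⟨hD, hhist⟩, by omega⟩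
      have hmiddisj : (↑(Finset.Ioc θ t ×ˢ (Finset.univ : Finset E)) : Set (ℕ × E)).PairwiseDisjoint
          (fun p : ℕ × E => {ω | Z t ω = j ∧ B t ω = u'} ∩ SMhist J T (SMext v p.2 p.1)) := by
        intro p1 _ p2 _ hne
        apply Set.disjoint_left.2
        rintro ω ⟨-, h1⟩ ⟨-, h2⟩
        rw [SMhist_ext] at h1 h2
        exact hne (Prod.ext (h1.2.2.symm.trans h2.2.2) (h1.2.1.symm.trans h2.2.1))
      have hmidval : (μ (({ω | Z t ω = j ∧ B t ω = u'} ∩ SMhist J T v) ∩ {ω | T (v.1+1) ω ≤ t})).toReal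
          = ∑ p ∈ Finset.Ioc θ t ×ˢ (Finset.univ : Finset E),
              (μ ({ω | Z t ω = j ∧ B t ω = u'} ∩ SMhist J T (SMext v p.2 p.1))).toReal := by
        rw [hmid, measure_biUnion_finset hmiddisj
            (fun p _ => (hZBm j u' t).inter (hHm _)),
          ENNReal.toReal_sum (fun p _ => measure_ne_top μ _)]
      have hterm : ∀ p ∈ Finset.Ioc θ t ×ˢ (Finset.univ : Finset E),
          (μ ({ω | Z t ω = j ∧ B t ω = u'} ∩ SMhist J T (SMext v p.2 p.1))).toReal
            = SMrho Q q a j u' t p.1 p.2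
                * (q (a + θ) θ (v.2.1 (Fin.last _)) p.2 p.1 * (μ (SMhist J T v)).toReal) := by
        intro p hp
        simp only [Finset.mem_product, Finset.mem_Ioc, Finset.mem_univ, and_true] at hp
        have hlast2 : (SMext v p.2 p.1).2.2 (Fin.last _) = p.1 := by
          simp [SMext, Fin.snoc_last]
        have hlast1 : (SMext v p.2 p.1).2.1 (Fin.last _) = p.2 := by
          simp [SMext, Fin.snoc_last]
        have hIH := IH (t - p.1) (by omega) p.1 rfl (by omega) (SMext v p.2 p.1) hlast2
        rw [hlast1] at hIH
        have hq2 := hL2 v p.2 p.1 (by rw [hvθ]; omega)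
        rw [hvθ] at hq2
        rw [hIH, hq2]
      have htail : (μ (({ω | Z t ω = j ∧ B t ω = u'} ∩ SMhist J T v) \ {ω | T (v.1+1) ω ≤ t})).toReal
          = (if v.2.1 (Fin.last _) = j ∧ θ + u' = t then
              1 - ∑ k' : E, Q (a + θ) θ (v.2.1 (Fin.last _)) k' t else 0)
              * (μ (SMhist J T v)).toReal := by
        have hdiffset : ({ω | Z t ω = j ∧ B t ω = u'} ∩ SMhist J T v) \ {ω | T (v.1+1) ω ≤ t}
            = if v.2.1 (Fin.last _) = j ∧ θ + u' = t then
                SMhist J T v ∩ {ω | t < T (v.1+1) ω} else ∅ := by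
          split_ifs with hc
          · ext ω
            simp only [Set.mem_diff, Set.mem_inter_iff, Set.mem_setOf_eq, not_le]
            constructor
            · rintro ⟨⟨-, hh⟩, hgt⟩
              exact ⟨hh, hgt⟩
            · rintro ⟨hh, hgt⟩
              have hTm' := hTm ω hh
              have hNt : N t ω = v.1 := hNeq ω v.1 t (by omega) hgt
              have hJv : J v.1 ω = v.2.1 (Fin.last _) := by
                have := (hh (Fin.last _)).1
                simpa [Fin.val_last] using this
              refine ⟨⟨⟨?_, ?_⟩, hh⟩, hgt⟩
              · rw [hZ, hNt, hJv, hc.1]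
              · rw [hB, hNt, hTm']
                omega
          · apply Set.eq_empty_iff_forall_notMem.2
            rintro ω ⟨⟨⟨hZt, hBt⟩, hh⟩, hgt⟩
            simp only [Set.mem_setOf_eq, not_le] at hgt
            have hTm' := hTm ω hh
            have hNt : N t ω = v.1 := hNeq ω v.1 t (by omega) hgt
            have hJv : J v.1 ω = v.2.1 (Fin.last _) := by
              have := (hh (Fin.last _)).1
              simpa [Fin.val_last] using this
            apply hc
            constructor
            · rw [← hZt, hZ, hNt, hJv]
            · rw [hB, hNt, hTm'] at hBt
              omega
        rw [hdiffset]
        split_ifs with hc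
        · have := hL3 v t
          rw [hvθ] at this
          exact this
        · simp
      have hsub : ∑ θ' ∈ Finset.Ioc θ t, ∑ k' : E,
            SMrho Q q a j u' t θ' k'
              * (q (a + θ) θ (v.2.1 (Fin.last _)) k' θ' * (μ (SMhist J T v)).toReal)
          = ∑ θ' ∈ Finset.Icc (θ+1) (t - u'), ∑ k' : E,
            SMrho Q q a j u' t θ' k'
              * (q (a + θ) θ (v.2.1 (Fin.last _)) k' θ' * (μ (SMhist J T v)).toReal) := by
        symm
        apply Finset.sum_subset
        · intro x hx
          simp only [Finset.mem_Icc, Finset.mem_Ioc] at *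
          omega
        · intro x hx hnx
          simp only [Finset.mem_Ioc, Finset.mem_Icc] at hx hnx
          have hx0 : t < x + u' := by omega
          apply Finset.sum_eq_zero
          intro k' _
          rw [SMrho_zero Q q a j u' t x k' hx0]
          ring
      rw [hsplit, hmidval, htail, Finset.sum_congr rfl hterm, Finset.sum_product, hsub,
        SMrho_eq, add_mul, Finset.sum_mul, add_comm]
      congr 1
      refine Finset.sum_congr rfl fun θ' _ => ?_
      rw [Finset.sum_mul]
      refine Finset.sum_congr rfl fun k' _ => ?_
      ring
  -- ## `SMrho` computes the conditional probabilities `φ` restarted at a transition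
  have keyE : ∀ (θ : ℕ) (k : E), θ ≤ t →
      (μ ({ω | Z t ω = j ∧ B t ω = u'} ∩ {ω | Z θ ω = k ∧ B θ ω = 0})).toReal
        = SMrho Q q a j u' t θ k * (μ {ω | Z θ ω = k ∧ B θ ω = 0}).toReal := by
    intro θ k hθt
    rw [hCnt _ (hZBm j u' t) k 0 θ, hCnt' k 0 θ, ← tsum_mul_left]
    apply tsum_congr
    intro v
    rw [SMpiece]
    split_ifs with hc
    · have hc21 : v.2.2 (Fin.last _) = θ := by
        have := hc.2.1
        omega
      have hpe : SMhist J T v ∩ {ω | θ < T (v.1+1) ω} = SMhist J T v := by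
        apply Set.inter_eq_left.2
        intro ω hh
        have hTv : T v.1 ω = θ := by
          have := (hh (Fin.last _)).2
          rw [hc21] at this
          simpa [Fin.val_last] using this
        have := hTsucc ω v.1
        simp only [Set.mem_setOf_eq]
        omega
      rw [hpe]
      have hkb := keyB (t - θ) θ rfl hθt v hc21
      rw [hc.1] at hkb
      exact hkb
    · simp
  have hphiOr : ∀ (θ : ℕ) (k : E), θ ≤ t →
      φ k 0 θ j u' t = SMrho Q q a j u' t θ k
        ∨ ((μ {ω | Z θ ω = k ∧ B θ ω = 0}).toReal = 0 ∧ φ k 0 θ j u' t = 0) := by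
    intro θ k hθt
    by_cases h0 : (μ {ω | Z θ ω = k ∧ B θ ω = 0}).toReal = 0
    · right
      refine ⟨h0, ?_⟩
      rw [hφ, h0, div_zero]
    · left
      rw [hφ, keyE θ k hθt, mul_div_assoc, div_self h0, mul_one]
  -- ## The top-level decomposition over the conditioning event
  have hCv : ∀ v : SMidx E, (μ (SMpiece J T v i u s)).toReal
      = (1 - ∑ k' : E, Q (a + (s-u)) (s-u) i k' s)
          * (if v.2.1 (Fin.last _) = i ∧ v.2.2 (Fin.last _) = s - u ∧ u ≤ s then
              (μ (SMhist J T v)).toReal else 0) := by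
    intro v
    rw [SMpiece]
    split_ifs with hc
    · have := hL3 v s
      rw [hc.1, hc.2.1] at this
      exact this
    · simp
  have hKv : ∀ v : SMidx E,
      (μ ({ω | Z t ω = j ∧ B t ω = u'} ∩ SMpiece J T v i u s)).toReal
        = ((if i = j ∧ (s - u) + u' = t then
              1 - ∑ k' : E, Q (a + (s-u)) (s-u) i k' t else 0)
            + ∑ θ' ∈ Finset.Icc (s+1) (t - u'), ∑ k' : E,
                q (a + (s-u)) (s-u) i k' θ' * SMrho Q q a j u' t θ' k')
          * (if v.2.1 (Fin.last _) = i ∧ v.2.2 (Fin.last _) = s - u ∧ u ≤ s then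
              (μ (SMhist J T v)).toReal else 0) := by
    intro v
    by_cases hc : v.2.1 (Fin.last _) = i ∧ v.2.2 (Fin.last _) = s - u ∧ u ≤ s
    swap
    · simp only [SMpiece, if_neg hc]
      simp
    simp only [SMpiece, if_pos hc]
    obtain ⟨hki, hτ, -⟩ := hc
    have hTm : ∀ ω, ω ∈ SMhist J T v → T v.1 ω = s - u := by
      intro ω hh
      have := (hh (Fin.last _)).2
      rw [hτ] at this
      simpa [Fin.val_last] using this
    have hXrw : {ω | Z t ω = j ∧ B t ω = u'} ∩ (SMhist J T v ∩ {ω | s < T (v.1+1) ω})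
        = ({ω | Z t ω = j ∧ B t ω = u'} ∩ SMhist J T v) ∩ {ω | s < T (v.1+1) ω} := by
      rw [Set.inter_assoc]
    have hmX : MeasurableSet (({ω | Z t ω = j ∧ B t ω = u'} ∩ SMhist J T v)
        ∩ {ω | s < T (v.1+1) ω}) :=
      ((hZBm j u' t).inter (hHm v)).inter ((hTmeas _) measurableSet_Ioi)
    have hsplit := htRadd (({ω | Z t ω = j ∧ B t ω = u'} ∩ SMhist J T v) ∩ {ω | s < T (v.1+1) ω})
      {ω | T (v.1+1) ω ≤ t} ((hTmeas _) measurableSet_Iic)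
    have hmid : (({ω | Z t ω = j ∧ B t ω = u'} ∩ SMhist J T v) ∩ {ω | s < T (v.1+1) ω})
          ∩ {ω | T (v.1+1) ω ≤ t}
        = ⋃ p ∈ (Finset.Ioc s t ×ˢ (Finset.univ : Finset E)),
            ({ω | Z t ω = j ∧ B t ω = u'} ∩ SMhist J T (SMext v p.2 p.1)) := by
      ext ω
      simp only [Set.mem_inter_iff, Set.mem_setOf_eq, Set.mem_iUnion, Finset.mem_product,
        Finset.mem_Ioc, Finset.mem_univ, and_true, exists_prop]
      constructor
      · rintro ⟨⟨⟨hD, hhist⟩, hsT⟩, hTle'⟩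
        refine ⟨(T (v.1+1) ω, J (v.1+1) ω), ⟨hsT, hTle'⟩, hD, ?_⟩
        rw [SMhist_ext]
        exact ⟨hhist, rfl, rfl⟩
      · rintro ⟨p, ⟨hθ', hle⟩, hD, hhist'⟩
        rw [SMhist_ext] at hhist'
        obtain ⟨hhist, hJp, hTp⟩ := hhist'
        exact ⟨⟨⟨hD, hhist⟩, by omega⟩, by omega⟩
    have hmiddisj : (↑(Finset.Ioc s t ×ˢ (Finset.univ : Finset E)) : Set (ℕ × E)).PairwiseDisjoint
        (fun p : ℕ × E => {ω | Z t ω = j ∧ B t ω = u'} ∩ SMhist J T (SMext v p.2 p.1)) := by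
      intro p1 _ p2 _ hne
      apply Set.disjoint_left.2
      rintro ω ⟨-, h1⟩ ⟨-, h2⟩
      rw [SMhist_ext] at h1 h2
      exact hne (Prod.ext (h1.2.2.symm.trans h2.2.2) (h1.2.1.symm.trans h2.2.1))
    have hmidval : (μ ((({ω | Z t ω = j ∧ B t ω = u'} ∩ SMhist J T v) ∩ {ω | s < T (v.1+1) ω})
          ∩ {ω | T (v.1+1) ω ≤ t})).toReal
        = ∑ p ∈ Finset.Ioc s t ×ˢ (Finset.univ : Finset E),
            (μ ({ω | Z t ω = j ∧ B t ω = u'} ∩ SMhist J T (SMext v p.2 p.1))).toReal := by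
      rw [hmid, measure_biUnion_finset hmiddisj (fun p _ => (hZBm j u' t).inter (hHm _)),
        ENNReal.toReal_sum (fun p _ => measure_ne_top μ _)]
    have hterm : ∀ p ∈ Finset.Ioc s t ×ˢ (Finset.univ : Finset E),
        (μ ({ω | Z t ω = j ∧ B t ω = u'} ∩ SMhist J T (SMext v p.2 p.1))).toReal
          = SMrho Q q a j u' t p.1 p.2
              * (q (a + (s-u)) (s-u) i p.2 p.1 * (μ (SMhist J T v)).toReal) := by
      intro p hp
      simp only [Finset.mem_product, Finset.mem_Ioc, Finset.mem_univ, and_true] at hp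
      have hlast2 : (SMext v p.2 p.1).2.2 (Fin.last _) = p.1 := by
        simp [SMext, Fin.snoc_last]
      have hlast1 : (SMext v p.2 p.1).2.1 (Fin.last _) = p.2 := by
        simp [SMext, Fin.snoc_last]
      have hIH := keyB (t - p.1) p.1 rfl (by omega) (SMext v p.2 p.1) hlast2
      rw [hlast1] at hIH
      have hq2 := hL2 v p.2 p.1 (by rw [hτ]; omega)
      rw [hτ, hki] at hq2
      rw [hIH, hq2]
    have htail : (μ ((({ω | Z t ω = j ∧ B t ω = u'} ∩ SMhist J T v) ∩ {ω | s < T (v.1+1) ω})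
          \ {ω | T (v.1+1) ω ≤ t})).toReal
        = (if i = j ∧ (s - u) + u' = t then
            1 - ∑ k' : E, Q (a + (s-u)) (s-u) i k' t else 0) * (μ (SMhist J T v)).toReal := by
      have hdiffset : (({ω | Z t ω = j ∧ B t ω = u'} ∩ SMhist J T v) ∩ {ω | s < T (v.1+1) ω})
            \ {ω | T (v.1+1) ω ≤ t}
          = if i = j ∧ (s - u) + u' = t then
              SMhist J T v ∩ {ω | t < T (v.1+1) ω} else ∅ := by
        split_ifs with hc2
        · ext ω
          simp only [Set.mem_diff, Set.mem_inter_iff, Set.mem_setOf_eq, not_le]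
          constructor
          · rintro ⟨⟨⟨-, hh⟩, -⟩, hgt⟩
            exact ⟨hh, hgt⟩
          · rintro ⟨hh, hgt⟩
            have hTm' := hTm ω hh
            have hNt : N t ω = v.1 := hNeq ω v.1 t (by omega) hgt
            have hJv : J v.1 ω = v.2.1 (Fin.last _) := by
              have := (hh (Fin.last _)).1
              simpa [Fin.val_last] using this
            refine ⟨⟨⟨⟨?_, ?_⟩, hh⟩, by omega⟩, hgt⟩
            · rw [hZ, hNt, hJv, hki, hc2.1]
            · rw [hB, hNt, hTm']
              omega
        · apply Set.eq_empty_iff_forall_notMem.2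
          rintro ω ⟨⟨⟨⟨hZt, hBt⟩, hh⟩, -⟩, hgt⟩
          simp only [Set.mem_setOf_eq, not_le] at hgt
          have hTm' := hTm ω hh
          have hNt : N t ω = v.1 := hNeq ω v.1 t (by omega) hgt
          have hJv : J v.1 ω = v.2.1 (Fin.last _) := by
            have := (hh (Fin.last _)).1
            simpa [Fin.val_last] using this
          apply hc2
          constructor
          · rw [← hZt, hZ, hNt, hJv, hki]
          · rw [hB, hNt, hTm'] at hBt
            omega
      rw [hdiffset]
      split_ifs with hc2
      · have := hL3 v t
        rw [hτ, hki] at this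
        exact this
      · simp
    have hsub : ∑ θ' ∈ Finset.Ioc s t, ∑ k' : E,
          SMrho Q q a j u' t θ' k'
            * (q (a + (s-u)) (s-u) i k' θ' * (μ (SMhist J T v)).toReal)
        = ∑ θ' ∈ Finset.Icc (s+1) (t - u'), ∑ k' : E,
          SMrho Q q a j u' t θ' k'
            * (q (a + (s-u)) (s-u) i k' θ' * (μ (SMhist J T v)).toReal) := by
      symm
      apply Finset.sum_subset
      · intro x hx
        simp only [Finset.mem_Icc, Finset.mem_Ioc] at *
        omega
      · intro x hx hnx
        simp only [Finset.mem_Ioc, Finset.mem_Icc] at hx hnx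
        have hx0 : t < x + u' := by omega
        apply Finset.sum_eq_zero
        intro k' _
        rw [SMrho_zero Q q a j u' t x k' hx0]
        ring
    rw [hXrw, hsplit, hmidval, htail, Finset.sum_congr rfl hterm, Finset.sum_product, hsub,
      add_mul, Finset.sum_mul, add_comm]
    congr 1
    refine Finset.sum_congr rfl fun θ' _ => ?_
    rw [Finset.sum_mul]
    refine Finset.sum_congr rfl fun k' _ => ?_
    ring
  -- ## Final assembly
  have hDC : (μ ({ω | Z t ω = j ∧ B t ω = u'} ∩ {ω | Z s ω = i ∧ B s ω = u})).toReal
      = ((if i = j ∧ (s - u) + u' = t then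
            1 - ∑ k' : E, Q (a + (s-u)) (s-u) i k' t else 0)
          + ∑ θ' ∈ Finset.Icc (s+1) (t - u'), ∑ k' : E,
              q (a + (s-u)) (s-u) i k' θ' * SMrho Q q a j u' t θ' k')
        * ∑' v : SMidx E, (if v.2.1 (Fin.last _) = i ∧ v.2.2 (Fin.last _) = s - u ∧ u ≤ s then
            (μ (SMhist J T v)).toReal else 0) := by
    rw [hCnt _ (hZBm j u' t) i u s, ← tsum_mul_left]
    exact tsum_congr hKv
  have hCC : (μ {ω | Z s ω = i ∧ B s ω = u}).toReal
      = (1 - ∑ k' : E, Q (a + (s-u)) (s-u) i k' s)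
        * ∑' v : SMidx E, (if v.2.1 (Fin.last _) = i ∧ v.2.2 (Fin.last _) = s - u ∧ u ≤ s then
            (μ (SMhist J T v)).toReal else 0) := by
    rw [hCnt' i u s, ← tsum_mul_left]
    exact tsum_congr hCv
  have hCpos : 0 < (μ {ω | Z s ω = i ∧ B s ω = u}).toReal :=
    ENNReal.toReal_pos hpos.ne' (measure_ne_top μ _)
  have hSne : (∑' v : SMidx E, (if v.2.1 (Fin.last _) = i ∧ v.2.2 (Fin.last _) = s - u ∧ u ≤ s then
      (μ (SMhist J T v)).toReal else 0)) ≠ 0 := by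
    intro h
    rw [hCC, h, mul_zero] at hCpos
    exact lt_irrefl 0 hCpos
  have hHne : (1 - ∑ k' : E, Q (a + (s-u)) (s-u) i k' s) ≠ 0 := by
    intro h
    rw [hCC, h, zero_mul] at hCpos
    exact lt_irrefl 0 hCpos
  have hexists : ∃ v : SMidx E,
      (v.2.1 (Fin.last _) = i ∧ v.2.2 (Fin.last _) = s - u ∧ u ≤ s)
        ∧ (μ (SMhist J T v)).toReal ≠ 0 := by
    by_contra hno
    push_neg at hno
    apply hSne
    have hz : ∀ v : SMidx E,
        (if v.2.1 (Fin.last _) = i ∧ v.2.2 (Fin.last _) = s - u ∧ u ≤ s then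
          (μ (SMhist J T v)).toReal else 0) = 0 := by
      intro v
      split_ifs with hcv
      · exact hno v hcv
      · rfl
    calc (∑' v : SMidx E, (if v.2.1 (Fin.last _) = i ∧ v.2.2 (Fin.last _) = s - u ∧ u ≤ s then
            (μ (SMhist J T v)).toReal else 0))
        = ∑' _ : SMidx E, (0:ℝ) := tsum_congr hz
      _ = 0 := tsum_zero
  have hqzero : ∀ (θ' : ℕ) (k' : E), s + 1 ≤ θ' →
      (μ {ω | Z θ' ω = k' ∧ B θ' ω = 0}).toReal = 0 →
      q (a + (s-u)) (s-u) i k' θ' = 0 := by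
    intro θ' k' h1 h0
    obtain ⟨v, hcv, hμv⟩ := hexists
    have hext := hL2 v k' θ' (by rw [hcv.2.1]; omega)
    rw [hcv.2.1, hcv.1] at hext
    have hsubset : SMhist J T (SMext v k' θ') ⊆ {ω | Z θ' ω = k' ∧ B θ' ω = 0} := by
      intro ω hω
      rw [SMhist_ext] at hω
      obtain ⟨hh, hJ', hT'⟩ := hω
      have hgt : θ' < T (v.1+1+1) ω := by
        have := hTsucc ω (v.1+1)
        omega
      have hNt : N θ' ω = v.1 + 1 := hNeq ω (v.1+1) θ' (le_of_eq hT') hgt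
      simp only [Set.mem_setOf_eq]
      constructor
      · rw [hZ, hNt]
        exact hJ'
      · rw [hB, hNt, hT']
        omega
    have h00 : (μ (SMhist J T (SMext v k' θ'))).toReal = 0 := by
      have hle := ENNReal.toReal_mono (measure_ne_top μ _) (measure_mono hsubset)
      rw [h0] at hle
      have hnn : 0 ≤ (μ (SMhist J T (SMext v k' θ'))).toReal := ENNReal.toReal_nonneg
      linarith
    rw [h00] at hext
    rcases mul_eq_zero.mp hext.symm with h | h
    · exact h
    · exact absurd h hμv
  rw [hφ, hDC, hCC, mul_div_mul_right _ _ hSne]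
  have haux : a + s - u = a + (s - u) := by omega
  rw [haux]
  simp only [hHbar]
  rw [add_div]
  congr 1
  · by_cases hij : i = j
    · by_cases hu' : u' = t - s + u
      · have hc : i = j ∧ (s - u) + u' = t := ⟨hij, by omega⟩
        rw [if_pos hc, if_pos hij, if_pos hu', one_mul, one_mul]
      · have hc : ¬(i = j ∧ (s - u) + u' = t) := by
          rintro ⟨-, h⟩
          exact hu' (by omega)
        rw [if_neg hc, if_neg hu', mul_zero, zero_mul, zero_div]
    · have hc : ¬(i = j ∧ (s - u) + u' = t) := fun h => hij h.1
      rw [if_neg hc, if_neg hij, zero_mul, zero_mul, zero_div]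
  · conv_lhs => rw [Finset.sum_comm]
    rw [Finset.sum_div]
    refine Finset.sum_congr rfl fun k' _ => ?_
    rw [Finset.sum_div]
    refine Finset.sum_congr rfl fun θ' hθ' => ?_
    simp only [Finset.mem_Icc] at hθ'
    have hθt' : θ' ≤ t := by omega
    rcases hphiOr θ' k' hθt' with h | ⟨h0, hφ0⟩
    · rw [← h]
      ring
    · rw [hqzero θ' k' (by omega) h0, hφ0]
      ring
end

section
/- Let T be an ℕ-valued random variable with T ≥ 1 almost surely and survival function S(t) = ℙ[T > t], δ ∈ (0,1), and n ≥ 2. Suppose the annual premium p satisfies the equivalence principle 𝔼[δ^T · 1_{\{T ≤ n\}}] = p · 𝔼[PVUP], and that 𝔼[PVUP] > 0. Then p = ( Σ_{s=1}^{n} (S(s−1) − S(s)) δ^s ) / ( Σ_{s=1}^{n−1} (Σ_{r=0}^{s−1} δ^r)(S(s−1) − S(s)) + (Σ_{r=0}^{n} δ^r) S(n−1) ). -/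
open MeasureTheory Finset

/-- **Fair premium of a temporary insurance policy under the equivalence principle.**
`T` is the ℕ-valued time of death, with `T ≥ 1` almost surely, `S t = ℙ[T > t]` the
survival function, `δ ∈ (0,1)` the discount factor and `n ≥ 2` the maturity.
`PVDB = δ^T · 1_{T ≤ n}` is the present value of the death benefit and `PVUP` the
present value of unitary premiums.  If the annual premium `p` satisfies the equivalence
principle `𝔼[PVDB] = p · 𝔼[PVUP]` and `𝔼[PVUP] > 0`, then
`p = (Σ_{s=1}^{n} (S(s-1) - S s) δ^s) /
     (Σ_{s=1}^{n-1} (Σ_{r=0}^{s-1} δ^r)(S(s-1) - S s) + (Σ_{r=0}^{n} δ^r) S(n-1))`. -/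
theorem tip_fair_premium
    {Ω : Type*} [MeasurableSpace Ω] (μ : Measure Ω) [IsProbabilityMeasure μ]
    (T : Ω → ℕ) (hTmeas : Measurable T) (hT1 : ∀ᵐ ω ∂μ, 1 ≤ T ω)
    (δ : ℝ) (hδ0 : 0 < δ) (hδ1 : δ < 1) (n : ℕ) (hn : 2 ≤ n)
    (S : ℕ → ℝ) (hS : ∀ t, S t = (μ {ω | t < T ω}).toReal)
    (PVDB : Ω → ℝ) (hPVDB : ∀ ω, PVDB ω = if T ω ≤ n then δ ^ T ω else 0)
    (PVUP : Ω → ℝ)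
    (hPVUP : ∀ ω, PVUP ω =
      if T ω ≤ n - 1 then ∑ r ∈ Finset.range (T ω), δ ^ r
      else ∑ r ∈ Finset.range (n + 1), δ ^ r)
    (p : ℝ)
    (hequiv : ∫ ω, PVDB ω ∂μ = p * ∫ ω, PVUP ω ∂μ)
    (hpos : 0 < ∫ ω, PVUP ω ∂μ) :
    p = (∑ s ∈ Finset.Icc 1 n, (S (s - 1) - S s) * δ ^ s)
        / (∑ s ∈ Finset.Icc 1 (n - 1),
              (∑ r ∈ Finset.range s, δ ^ r) * (S (s - 1) - S s)
           + (∑ r ∈ Finset.range (n + 1), δ ^ r) * S (n - 1)) := by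
  have hmeasT : ∀ s : ℕ, MeasurableSet {ω | T ω = s} := fun s =>
    hTmeas (measurableSet_singleton s)
  have hmeasGT : ∀ s : ℕ, MeasurableSet {ω | s < T ω} := fun s =>
    hTmeas measurableSet_Ioi
  have hkey : ∀ s : ℕ, 1 ≤ s → (μ {ω | T ω = s}).toReal = S (s - 1) - S s := by
    intro s hs
    rw [hS, hS]
    have hset : {ω | s - 1 < T ω} = {ω | T ω = s} ∪ {ω | s < T ω} := by
      ext ω; simp only [Set.mem_setOf_eq, Set.mem_union]; omega
    have hdisj : Disjoint {ω | T ω = s} {ω | s < T ω} := by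
      rw [Set.disjoint_left]; intro ω h1 h2
      simp only [Set.mem_setOf_eq] at h1 h2; omega
    rw [hset, measure_union hdisj (hmeasGT s),
      ENNReal.toReal_add (measure_ne_top μ _) (measure_ne_top μ _)]
    ring
  -- Expected present value of the death benefit
  have hEPVDB : ∫ ω, PVDB ω ∂μ
      = ∑ s ∈ Finset.Icc 1 n, (S (s - 1) - S s) * δ ^ s := by
    have hae : (fun ω => PVDB ω) =ᵐ[μ]
        fun ω => ∑ s ∈ Finset.Icc 1 n,
          Set.indicator {ω' | T ω' = s} (fun _ => δ ^ s) ω := by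
      filter_upwards [hT1] with ω hω
      rw [hPVDB]
      simp only [Set.indicator_apply, Set.mem_setOf_eq]
      rw [Finset.sum_ite_eq (Finset.Icc 1 n) (T ω) fun s => δ ^ s]
      simp [Finset.mem_Icc, hω]
    rw [integral_congr_ae hae,
      integral_finset_sum _ (fun s _ => (integrable_const _).indicator (hmeasT s))]
    refine Finset.sum_congr rfl fun s hs => ?_
    rw [integral_indicator_const _ (hmeasT s), smul_eq_mul, measureReal_def,
      hkey s (Finset.mem_Icc.mp hs).1]
  -- Expected present value of unitary premiums
  have hEPVUP : ∫ ω, PVUP ω ∂μ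
      = ∑ s ∈ Finset.Icc 1 (n - 1),
          (∑ r ∈ Finset.range s, δ ^ r) * (S (s - 1) - S s)
        + (∑ r ∈ Finset.range (n + 1), δ ^ r) * S (n - 1) := by
    have hae : (fun ω => PVUP ω) =ᵐ[μ]
        fun ω => (∑ s ∈ Finset.Icc 1 (n - 1),
          Set.indicator {ω' | T ω' = s} (fun _ => ∑ r ∈ Finset.range s, δ ^ r) ω)
          + Set.indicator {ω' | n - 1 < T ω'}
              (fun _ => ∑ r ∈ Finset.range (n + 1), δ ^ r) ω := by
      filter_upwards [hT1] with ω hω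
      rw [hPVUP]
      simp only [Set.indicator_apply, Set.mem_setOf_eq]
      rw [Finset.sum_ite_eq (Finset.Icc 1 (n - 1)) (T ω)
        fun s => ∑ r ∈ Finset.range s, δ ^ r]
      by_cases h : T ω ≤ n - 1
      · simp [Finset.mem_Icc, hω, h, Nat.not_lt.mpr h]
      · simp [Finset.mem_Icc, h, Nat.lt_of_not_le h]
    rw [integral_congr_ae hae]
    rw [integral_add
      (integrable_finset_sum _ (fun s _ => (integrable_const _).indicator (hmeasT s)))
      ((integrable_const _).indicator (hmeasGT (n - 1))),
      integral_finset_sum _ (fun s _ => (integrable_const _).indicator (hmeasT s)),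
      integral_indicator_const _ (hmeasGT (n - 1)), smul_eq_mul]
    congr 1
    · refine Finset.sum_congr rfl fun s hs => ?_
      rw [integral_indicator_const _ (hmeasT s), smul_eq_mul, measureReal_def,
        hkey s (Finset.mem_Icc.mp hs).1]
      ring
    · rw [hS, measureReal_def]; ring
  rw [← hEPVDB, ← hEPVUP, eq_div_iff hpos.ne']
  linarith [hequiv]
end
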